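/- Let 0 < b < a < 2 and let z range over the open upper half-plane. Then (z^a - 1)/(z^b - 1) tends to z^{a-b} in argument as |z| → ∞, uniformly in the argument of z: for every ε > 0 there exists R > 0 such that for all z = r·e^{iθ} with 0 < θ < π and r > R, |arg((z^a - 1)/(z^b - 1)) - (a - b)θ| < ε, where z^a = exp(a·Log z) with the principal logarithm and arg((z^a-1)/(z^b-1)) = Arg(z^a - 1) - Arg(z^b - 1) with Arg taking values so that the expression is continuous (one may use the principal argument branch on (0, 2π)). -/

import Mathlib

open Real

/-- The argument function with values in `[0, 2π)`. -/
noncomputable def Arg2 (z : ℂ) : ℝ :=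
  if Complex.arg z < 0 then Complex.arg z + 2 * Real.pi else Complex.arg z

lemma pow_eq_aux (r θ c : ℝ) (hr : 0 < r) (hθ0 : 0 < θ) (hθπ : θ < π) :
    (↑r * Complex.exp (↑θ * Complex.I)) ^ (c : ℂ)
      = ↑(r ^ c) * Complex.exp (↑(c * θ) * Complex.I) := by
  set z : ℂ := ↑r * Complex.exp (↑θ * Complex.I) with hzdef
  have hz : z ≠ 0 := mul_ne_zero (by exact_mod_cast hr.ne') (Complex.exp_ne_zero _)
  have habs : ‖z‖ = r := by
    rw [hzdef, norm_mul, Complex.norm_exp_ofReal_mul_I, Complex.norm_real, Real.norm_eq_abs, abs_of_pos hr, mul_one]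
  have harg : Complex.arg z = θ := by
    rw [hzdef, Complex.exp_mul_I,
      Complex.arg_mul_cos_add_sin_mul_I hr ⟨by linarith [Real.pi_pos], hθπ.le⟩]
  have hlog : Complex.log z = ↑(Real.log r) + ↑θ * Complex.I := by
    rw [Complex.log, habs, harg]
  rw [Complex.cpow_def_of_ne_zero hz, hlog,
    show (↑(Real.log r) + ↑θ * Complex.I) * (c : ℂ)
        = ↑(c * Real.log r) + ↑(c * θ) * Complex.I by push_cast; ring,
    Complex.exp_add]
  congr 1
  rw [← Complex.ofReal_exp]
  norm_cast
  rw [Real.rpow_def_of_pos hr, mul_comm]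

lemma Arg2_eq_aux (s ψ : ℝ) (hs : 0 < s) (h0 : 0 < ψ) (h2 : ψ < 2 * π) :
    Arg2 (↑s * Complex.exp (↑ψ * Complex.I)) = ψ := by
  rcases le_or_gt ψ π with h | h
  · have harg : Complex.arg (↑s * Complex.exp (↑ψ * Complex.I)) = ψ := by
      rw [Complex.exp_mul_I,
        Complex.arg_mul_cos_add_sin_mul_I hs ⟨by linarith [Real.pi_pos], h⟩]
    rw [Arg2, harg, if_neg (not_lt.2 h0.le)]
  · have hper : (↑s * Complex.exp (↑ψ * Complex.I))
        = ↑s * Complex.exp (↑(ψ - 2 * π) * Complex.I) := by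
      congr 1
      rw [show (↑(ψ - 2 * π) : ℂ) * Complex.I = ↑ψ * Complex.I - 2 * ↑π * Complex.I by
        push_cast; ring, Complex.exp_sub, Complex.exp_two_pi_mul_I, div_one]
    have harg : Complex.arg (↑s * Complex.exp (↑ψ * Complex.I)) = ψ - 2 * π := by
      rw [hper, Complex.exp_mul_I,
        Complex.arg_mul_cos_add_sin_mul_I hs ⟨by linarith, by linarith [Real.pi_pos]⟩]
    rw [Arg2, harg, if_pos (by linarith [Real.pi_pos])]
    ring

set_option maxHeartbeats 1000000 in
lemma key_est (s ψ : ℝ) (hs : 2 ≤ s) (h0 : 0 < ψ) (h2 : ψ < 2 * π) :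
    |Arg2 (↑s * Complex.exp (↑ψ * Complex.I) - 1) - ψ| ≤ π / s := by
  have hπ := Real.pi_pos
  have hs0 : (0 : ℝ) < s := by linarith
  set w : ℂ := ↑s * Complex.exp (↑ψ * Complex.I) with hwdef
  have habs : ‖w‖ = s := by
    rw [hwdef, norm_mul, Complex.norm_exp_ofReal_mul_I, Complex.norm_real, Real.norm_eq_abs, abs_of_pos hs0, mul_one]
  have hw0 : w ≠ 0 := by
    intro h
    rw [h] at habs
    simp at habs
    linarith
  have hre : w.re = s * Real.cos ψ := by
    rw [hwdef, Complex.exp_mul_I]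
    simp [Complex.mul_re, Complex.mul_im, Complex.cos_ofReal_re, Complex.sin_ofReal_re]
  have him : w.im = s * Real.sin ψ := by
    rw [hwdef, Complex.exp_mul_I]
    simp [Complex.mul_re, Complex.mul_im, Complex.cos_ofReal_re, Complex.sin_ofReal_re]
  have hArg2w : Arg2 w = ψ := Arg2_eq_aux s ψ hs0 h0 h2
  have hw1 : w - 1 ≠ 0 := by
    intro h
    have : w = 1 := by linear_combination h
    rw [this] at habs
    simp at habs
    linarith
  set u : ℂ := (w - 1) / w with hudef
  have huw : w - 1 = w * u := by
    rw [hudef]; field_simp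
  have hu : u = 1 - w⁻¹ := by
    rw [hudef]; field_simp
  have hinv : ‖w⁻¹‖ = s⁻¹ := by rw [norm_inv, habs]
  have hinv_le : ‖w⁻¹‖ ≤ 1 / 2 := by
    rw [hinv]
    rw [inv_le_comm₀ hs0 (by norm_num)] at *
    · linarith
  have hure : 1 / 2 ≤ u.re := by
    have h1 : |(w⁻¹).re| ≤ ‖w⁻¹‖ := Complex.abs_re_le_norm _
    have : u.re = 1 - (w⁻¹).re := by rw [hu]; simp
    rw [this]
    have := abs_le.1 h1
    linarith [this.2, hinv_le]
  have huim : |u.im| ≤ 1 / s := by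
    have h1 : |(w⁻¹).im| ≤ ‖w⁻¹‖ := Complex.abs_im_le_norm _
    have h2 : u.im = -(w⁻¹).im := by rw [hu]; simp
    rw [h2, abs_neg, ← one_div s] at *
    rw [hinv] at h1
    simpa [one_div] using h1
  have hu0 : u ≠ 0 := by
    intro h
    rw [h] at hure
    norm_num at hure
  have huabs : 1 / 2 ≤ ‖u‖ := le_trans hure (Complex.re_le_norm u)
  have hargu_lt : |Complex.arg u| < π / 2 :=
    Complex.abs_arg_lt_pi_div_two_iff.2 (Or.inl (by linarith))
  have hbound : |Complex.arg u| ≤ π / s := by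
    have h1 : 2 / π * |Complex.arg u| ≤ |Real.sin (Complex.arg u)| :=
      Real.mul_abs_le_abs_sin hargu_lt.le
    have h2 : Real.sin (Complex.arg u) = u.im / ‖u‖ := Complex.sin_arg u
    have h3 : |Real.sin (Complex.arg u)| ≤ 2 / s := by
      rw [h2, abs_div, _root_.abs_of_nonneg (norm_nonneg u),
        div_le_div_iff₀ (by linarith) hs0]
      calc |u.im| * s ≤ (1 / s) * s := by
            apply mul_le_mul_of_nonneg_right huim hs0.le
        _ = 1 := by field_simp
        _ ≤ 2 * ‖u‖ := by linarith
    have h4 : 2 / π * |Complex.arg u| ≤ 2 / s := le_trans h1 h3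
    have h5 : 2 * |Complex.arg u| * s ≤ 2 * π := by
      have h6 := mul_le_mul_of_nonneg_right h4 (mul_nonneg hπ.le hs0.le)
      have h7 : 2 / π * |Complex.arg u| * (π * s) = 2 * |Complex.arg u| * s := by
        field_simp
      have h8 : 2 / s * (π * s) = 2 * π := by field_simp
      rw [h7, h8] at h6
      exact h6
    rw [le_div_iff₀ hs0]
    linarith
  -- angle equation
  have hangle : (Complex.arg (w - 1) : Real.Angle) = ↑(Complex.arg w + Complex.arg u) := by
    rw [huw, Complex.arg_mul_coe_angle hw0 hu0, Real.Angle.coe_add]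
  obtain ⟨k, hk⟩ := Real.Angle.angle_eq_iff_two_pi_dvd_sub.1 hangle
  -- case analysis on the sign of w.im
  rcases lt_trichotomy w.im 0 with hneg | hzero | hpos
  · -- both args in (-π, 0)
    have him1 : (w - 1).im = w.im := by simp
    have ha1 : Complex.arg (w - 1) < 0 := Complex.arg_neg_iff.2 (by rw [him1]; exact hneg)
    have ha2 : Complex.arg w < 0 := Complex.arg_neg_iff.2 hneg
    have hb1 : -π < Complex.arg (w - 1) := Complex.neg_pi_lt_arg _
    have hb2 : -π < Complex.arg w := Complex.neg_pi_lt_arg _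
    have hk0 : k = 0 := by
      have habs_k : |2 * π * k| < 2 * π := by
        rw [← hk]
        have hlt := abs_lt.1 hargu_lt
        rw [abs_lt]
        constructor <;> nlinarith
      have hk1 : |(k : ℝ)| < 1 := by
        rw [abs_mul, abs_mul, abs_of_pos (by norm_num : (0:ℝ) < 2), abs_of_pos hπ] at habs_k
        nlinarith [abs_nonneg (k : ℝ)]
      have hk2 : |k| < 1 := by exact_mod_cast hk1
      have hk3 := abs_lt.mp hk2
      omega
    rw [hk0] at hk
    push_cast at hk
    have heq : Complex.arg (w - 1) = Complex.arg w + Complex.arg u := by linarith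
    have hA1 : Arg2 (w - 1) = Complex.arg (w - 1) + 2 * π := by rw [Arg2, if_pos ha1]
    have hA2 : Arg2 w = Complex.arg w + 2 * π := by rw [Arg2, if_pos ha2]
    have : Arg2 (w - 1) - ψ = Complex.arg u := by
      rw [hA1, heq, ← hArg2w, hA2]; ring
    rw [this]
    exact hbound
  · -- w is a negative real; ψ = π
    have hsin : Real.sin ψ = 0 := by
      have := him; rw [hzero] at this
      have := this.symm
      rcases mul_eq_zero.1 this with h | h
      · linarith
      · exact h
    have hψπ : ψ = π := by
      obtain ⟨n, hn⟩ := Real.sin_eq_zero_iff.1 hsin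
      have hn1 : (0 : ℝ) < n := by nlinarith
      have hn2 : (n : ℝ) < 2 := by nlinarith
      have : (0 : ℤ) < n := by exact_mod_cast hn1
      have : n < 2 := by exact_mod_cast hn2
      have : n = 1 := by omega
      rw [this] at hn
      simpa using hn.symm
    have hcos : Real.cos ψ = -1 := by rw [hψπ, Real.cos_pi]
    have hwre : w.re < 0 := by rw [hre, hcos]; nlinarith
    have harg_w1 : Complex.arg (w - 1) = π := by
      rw [Complex.arg_eq_pi_iff]
      constructor
      · simp only [Complex.sub_re, Complex.one_re]
        linarith
      · simp [hzero]
    have hA1 : Arg2 (w - 1) = π := by rw [Arg2, harg_w1, if_neg (not_lt.2 hπ.le)]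
    rw [hA1, hψπ]
    simp
    positivity
  · -- both args in (0, π]
    have him1 : (w - 1).im = w.im := by simp
    have ha1 : 0 ≤ Complex.arg (w - 1) := Complex.arg_nonneg_iff.2 (by rw [him1]; exact hpos.le)
    have ha2 : 0 ≤ Complex.arg w := Complex.arg_nonneg_iff.2 hpos.le
    have hb1 : Complex.arg (w - 1) ≤ π := Complex.arg_le_pi _
    have hb2 : Complex.arg w ≤ π := Complex.arg_le_pi _
    have hk0 : k = 0 := by
      have habs_k : |2 * π * k| < 2 * π := by
        rw [← hk]
        have hlt := abs_lt.1 hargu_lt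
        rw [abs_lt]
        constructor <;> nlinarith
      have hk1 : |(k : ℝ)| < 1 := by
        rw [abs_mul, abs_mul, abs_of_pos (by norm_num : (0:ℝ) < 2), abs_of_pos hπ] at habs_k
        nlinarith [abs_nonneg (k : ℝ)]
      have hk2 : |k| < 1 := by exact_mod_cast hk1
      have hk3 := abs_lt.mp hk2
      omega
    rw [hk0] at hk
    push_cast at hk
    have heq : Complex.arg (w - 1) = Complex.arg w + Complex.arg u := by linarith
    have hA1 : Arg2 (w - 1) = Complex.arg (w - 1) := by rw [Arg2, if_neg (not_lt.2 ha1)]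
    have hA2 : Arg2 w = Complex.arg w := by rw [Arg2, if_neg (not_lt.2 ha2)]
    have : Arg2 (w - 1) - ψ = Complex.arg u := by
      rw [hA1, heq, ← hArg2w, hA2]; ring
    rw [this]
    exact hbound

set_option maxHeartbeats 1000000 in
theorem stmt2 (a b : ℝ) (hb : 0 < b) (hba : b < a) (ha : a < 2) :
    ∀ ε > (0:ℝ), ∃ R > (0:ℝ), ∀ r θ : ℝ, R < r → 0 < θ → θ < Real.pi →
      |Arg2 ((↑r * Complex.exp (θ * Complex.I)) ^ (a:ℂ) - 1)
        - Arg2 ((↑r * Complex.exp (θ * Complex.I)) ^ (b:ℂ) - 1)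
        - (a - b) * θ| < ε := by
  intro ε hε
  have hπ := Real.pi_pos
  set M : ℝ := max 2 (4 * π / ε) with hMdef
  have hM2 : (2 : ℝ) ≤ M := le_max_left _ _
  have hM0 : (0 : ℝ) < M := by linarith
  have hMε : 4 * π / ε ≤ M := le_max_right _ _
  refine ⟨M ^ (1 / b), Real.rpow_pos_of_pos hM0 _, ?_⟩
  intro r θ hrR hθ0 hθπ
  have hR1 : (1 : ℝ) < M ^ (1 / b) := by
    rw [Real.one_lt_rpow_iff_of_pos hM0]
    left
    exact ⟨by linarith, by positivity⟩
  have hr1 : 1 < r := lt_trans hR1 hrR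
  have hr0 : 0 < r := by linarith
  have hrb : M < r ^ b := by
    have h := Real.rpow_lt_rpow (Real.rpow_pos_of_pos hM0 _).le hrR hb
    rwa [← Real.rpow_mul hM0.le, one_div, inv_mul_cancel₀ hb.ne', Real.rpow_one] at h
  have hra : r ^ b ≤ r ^ a := Real.rpow_le_rpow_of_exponent_le hr1.le hba.le
  have h2b : 2 ≤ r ^ b := le_trans hM2 hrb.le
  have h2a : 2 ≤ r ^ a := le_trans h2b hra
  have ha0 : 0 < a := lt_trans hb hba
  have hA := key_est (r ^ a) (a * θ) h2a (by positivity) (by nlinarith)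
  have hB := key_est (r ^ b) (b * θ) h2b (by positivity) (by nlinarith)
  rw [pow_eq_aux r θ a hr0 hθ0 hθπ, pow_eq_aux r θ b hr0 hθ0 hθπ]
  have hrb0 : 0 < r ^ b := by positivity
  have hra0 : 0 < r ^ a := by positivity
  have hπa : π / r ^ a ≤ π / r ^ b := by
    apply div_le_div_of_nonneg_left hπ.le hrb0 hra
  have hfin : π / r ^ b < ε / 2 := by
    have h1 : 4 * π / ε < r ^ b := lt_of_le_of_lt hMε hrb
    rw [div_lt_iff₀ hε] at h1
    rw [div_lt_iff₀ hrb0]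
    nlinarith
  calc |Arg2 (↑(r ^ a) * Complex.exp (↑(a * θ) * Complex.I) - 1)
        - Arg2 (↑(r ^ b) * Complex.exp (↑(b * θ) * Complex.I) - 1) - (a - b) * θ|
      = |(Arg2 (↑(r ^ a) * Complex.exp (↑(a * θ) * Complex.I) - 1) - a * θ)
        - (Arg2 (↑(r ^ b) * Complex.exp (↑(b * θ) * Complex.I) - 1) - b * θ)| := by
        ring_nf
    _ ≤ |Arg2 (↑(r ^ a) * Complex.exp (↑(a * θ) * Complex.I) - 1) - a * θ|
        + |Arg2 (↑(r ^ b) * Complex.exp (↑(b * θ) * Complex.I) - 1) - b * θ| := abs_sub _ _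
    _ ≤ π / r ^ a + π / r ^ b := add_le_add hA hB
    _ ≤ π / r ^ b + π / r ^ b := by linarith
    _ < ε := by linarith
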